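/- Let ν = (n₁,…,n_k) be a tuple of positive integers and let ℓ be an integer with ℓ ≥ (1/2)·max{n₁+1,…,n_k+1,k} and 2ℓ ≥ k+1. Consider the simple graph G on the vertex set {1,…,2ℓk} in which distinct vertices i and j are adjacent exactly when (B_{ν,ℓ})_{ij} = 0. Then every cycle in G has length 3; in particular, the vertex set of every simple closed path in G spans a clique of G. -/

import Mathlib

open Matrix

/-- Entry of the antisymmetric matrix `S_N` whose entries above the diagonal are all `1`
(indices are 0-based naturals). -/
def SmatE (p q : ℕ) : ℤ := if p < q then 1 else if q < p then -1 else 0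

/-- The vector `v_{n,ℓ} ∈ ℤ^{2ℓ-1}` (0-based index `p`). -/
def vvecE (n ℓ p : ℕ) : ℤ :=
  if p < n then (-1) ^ p
  else if p = 2 * ℓ - 2 ∧ Even n then 0
  else 1

/-- Entry of the 2ℓ×2ℓ block matrix `A_{n,ℓ} = [[S_{2ℓ-1}, v_{n,ℓ}], [-v_{n,ℓ}ᵀ, 0]]`
(0-based indices). -/
def AmatE (n ℓ p q : ℕ) : ℤ :=
  if p < 2 * ℓ - 1 then
    (if q < 2 * ℓ - 1 then SmatE p q else vvecE n ℓ p)
  else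
    (if q < 2 * ℓ - 1 then -(vvecE n ℓ q) else 0)

/-- The antisymmetric 2ℓ×2ℓ integer matrix `A_{n,ℓ}`. -/
def Amat (n ℓ : ℕ) : Matrix (Fin (2 * ℓ)) (Fin (2 * ℓ)) ℤ :=
  Matrix.of fun i j => AmatE n ℓ (i : ℕ) (j : ℕ)

/-- The antisymmetric `2ℓk × 2ℓk` matrix `B_{ν,ℓ}` for `ν = (ν 0, …, ν (k-1))`, defined
inductively: `B` for `k = 1` is `A_{ν 0, ℓ}`, and `B` for `k+1` is the block matrix
`[[B_k, C],[-Cᵀ, A_{ν k, ℓ}]]` where each column of `C` equals the `k`-th column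
(1-based; 0-based index `k-1`) of `B_k`. -/
def Bmat (ℓ : ℕ) (ν : ℕ → ℕ) : (k : ℕ) → Matrix (Fin (2 * ℓ * k)) (Fin (2 * ℓ * k)) ℤ
  | 0 => 0
  | k + 1 =>
    let B := Bmat ℓ ν k
    let C : Matrix (Fin (2 * ℓ * k)) (Fin (2 * ℓ)) ℤ :=
      Matrix.of fun i _ => if h : k - 1 < 2 * ℓ * k then B i ⟨k - 1, h⟩ else 0
    Matrix.reindex (finSumFinEquiv.trans (finCongr (by ring)))
      (finSumFinEquiv.trans (finCongr (by ring)))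
      (Matrix.fromBlocks B C (-Cᵀ) (Amat (ν k) ℓ))

def BE (ℓ : ℕ) (ν : ℕ → ℕ) : ℕ → ℕ → ℕ → ℤ
  | 0, _, _ => 0
  | (k+1), i, j =>
    if i < 2*ℓ*k then
      (if j < 2*ℓ*k then BE ℓ ν k i j
       else if k - 1 < 2*ℓ*k then BE ℓ ν k i (k-1) else 0)
    else
      (if j < 2*ℓ*k then -(if k - 1 < 2*ℓ*k then BE ℓ ν k j (k-1) else 0)
       else AmatE (ν k) ℓ (i - 2*ℓ*k) (j - 2*ℓ*k))

lemma sumSymm {m n : ℕ} (x : Fin (m+n)) :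
    finSumFinEquiv.symm x = if h : (x:ℕ) < m then Sum.inl ⟨x, h⟩
      else Sum.inr ⟨(x:ℕ) - m, by omega⟩ := by
  split_ifs with h
  · rw [Equiv.symm_apply_eq]; ext; simp
  · rw [Equiv.symm_apply_eq]; ext; simp; omega

lemma Bmat_eq_BE (ℓ : ℕ) (ν : ℕ → ℕ) :
    ∀ (k : ℕ) (i j : Fin (2 * ℓ * k)), Bmat ℓ ν k i j = BE ℓ ν k (i:ℕ) (j:ℕ) := by
  intro k
  induction k with
  | zero => intro i j; exact absurd i.2 (by simp)
  | succ k ih =>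
    intro i j
    have hi : (i:ℕ) < 2*ℓ*k + 2*ℓ := by have := i.2; nlinarith [i.2, j.2]
    have hj : (j:ℕ) < 2*ℓ*k + 2*ℓ := by have := j.2; nlinarith [i.2, j.2]
    simp only [Bmat, Matrix.reindex_apply, Matrix.submatrix_apply, Equiv.symm_trans_apply,
      finCongr_symm, finCongr_apply]
    rw [sumSymm, sumSymm]
    simp only [Fin.coe_cast]
    by_cases hik : (i:ℕ) < 2*ℓ*k <;> by_cases hjk : (j:ℕ) < 2*ℓ*k <;>
      simp only [hik, hjk, dif_pos, dif_neg, not_false_iff, if_pos, if_neg, BE,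
        Matrix.fromBlocks_apply₁₁, Matrix.fromBlocks_apply₁₂, Matrix.fromBlocks_apply₂₁,
        Matrix.fromBlocks_apply₂₂, Matrix.of_apply, Matrix.neg_apply, Matrix.transpose_apply]
    · exact ih _ _
    · split_ifs with h
      · exact ih _ _
      · rfl
    · split_ifs with h
      · rw [ih]
      · rfl
    · rfl

lemma SmatE_eq_zero {p q : ℕ} : SmatE p q = 0 ↔ p = q := by
  unfold SmatE; split_ifs <;> simp <;> omega

lemma vvecE_ne_zero {n ℓ m : ℕ} (h : m ≠ 2*ℓ-2) : vvecE n ℓ m ≠ 0 := by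
  unfold vvecE; split_ifs with h1 h2
  · exact pow_ne_zero _ (by norm_num)
  · exact absurd h2.1 h
  · norm_num

lemma BE_blk0 {ℓ : ℕ} {ν : ℕ → ℕ} (hℓ : 0 < ℓ) :
    ∀ k, 1 ≤ k → ∀ p q, p < 2*ℓ → q < 2*ℓ → BE ℓ ν k p q = AmatE (ν 0) ℓ p q := by
  intro k
  induction k with
  | zero => omega
  | succ k ih =>
    intro _ p q hp hq
    rcases Nat.eq_zero_or_pos k with rfl | hk
    · simp only [BE]; norm_num
    · have h2 : 2*ℓ ≤ 2*ℓ*k := by nlinarith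
      simp only [BE, if_pos (by omega : p < 2*ℓ*k), if_pos (by omega : q < 2*ℓ*k)]
      exact ih hk p q hp hq

lemma AmatE_col {n ℓ m p : ℕ} (hm : m < 2*ℓ-2) (hp : p < 2*ℓ) :
    (AmatE n ℓ p m = 0 ↔ p = m) := by
  unfold AmatE
  by_cases h : p < 2*ℓ-1
  · rw [if_pos h, if_pos (by omega : m < 2*ℓ-1)]; exact SmatE_eq_zero
  · rw [if_neg h, if_pos (by omega : m < 2*ℓ-1), neg_eq_zero]
    have := vvecE_ne_zero (n := n) (ℓ := ℓ) (m := m) (by omega)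
    constructor
    · intro hc; exact absurd hc this
    · omega

lemma BE_colG {ℓ : ℕ} {ν : ℕ → ℕ} (hℓ : 0 < ℓ) :
    ∀ k, k+1 ≤ 2*ℓ → ∀ m, m < 2*ℓ-2 → ∀ i, i < 2*ℓ*k →
      (BE ℓ ν k i m = 0 ↔ (i = m ∨ (2*ℓ*(m+1) ≤ i ∧ i < 2*ℓ*(m+2) ∧ m+2 ≤ k))) := by
  intro k
  induction k with
  | zero => intro _ m _ i hi; simp at hi
  | succ k ih =>
    intro hk2 m hm i hi
    rcases Nat.eq_zero_or_pos k with rfl | hk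
    · have hi' : i < 2*ℓ := by nlinarith
      simp only [BE, Nat.mul_zero, Nat.not_lt_zero, if_false, Nat.sub_zero]
      rw [AmatE_col (n := ν 0) hm hi']
      constructor
      · intro h; exact Or.inl h
      · rintro (h | ⟨_, _, h3⟩); exact h; omega
    · have hA : 2*ℓ ≤ 2*ℓ*k := by nlinarith
      by_cases hik : i < 2*ℓ*k
      · simp only [BE, if_pos hik, if_pos (show m < 2*ℓ*k by omega)]
        rw [ih (by omega) m hm i hik]
        constructor
        · rintro (h | ⟨h1, h2, h3⟩); exact Or.inl h; exact Or.inr ⟨h1, h2, by omega⟩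
        · rintro (h | ⟨h1, h2, h3⟩); exact Or.inl h
          refine Or.inr ⟨h1, h2, ?_⟩
          rcases Nat.lt_or_ge (m+2) (k+1) with h4 | h4; omega
          have e1 : m+1 = k := by omega
          rw [e1] at h1; omega
      · simp only [BE, if_neg hik, if_pos (show m < 2*ℓ*k by omega),
          if_pos (show k - 1 < 2*ℓ*k by omega), neg_eq_zero]
        rw [BE_blk0 hℓ k hk m (k-1) (by omega) (by omega)]
        unfold AmatE
        rw [if_pos (show m < 2*ℓ-1 by omega), if_pos (show k-1 < 2*ℓ-1 by omega),
          SmatE_eq_zero]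
        constructor
        · intro h
          right
          have e1 : m+1 = k := by omega
          refine ⟨by rw [e1]; omega, ?_, by omega⟩
          have e2 : m+2 = k+1 := by omega
          rw [e2]; exact hi
        · rintro (h | ⟨h1, h2, h3⟩)
          · omega
          · have h4 : 2*ℓ*k < 2*ℓ*(m+2) := by omega
            have h5 : k < m+2 := Nat.lt_of_mul_lt_mul_left h4
            omega

lemma vvecE_zero {n ℓ p : ℕ} (hn2 : n+1 ≤ 2*ℓ) :
    vvecE n ℓ p = 0 ↔ (Even n ∧ p = 2*ℓ-2) := by
  unfold vvecE; split_ifs with h1 h2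
  · constructor
    · intro h; exact absurd h (pow_ne_zero _ (by norm_num))
    · rintro ⟨he, rfl⟩; obtain ⟨r, hr⟩ := he; omega
  · exact iff_of_true rfl ⟨h2.2, h2.1⟩
  · constructor
    · intro h; norm_num at h
    · intro h; exact absurd ⟨h.2, h.1⟩ h2

lemma AmatE_zero {n ℓ p q : ℕ} (hn : 0 < n) (hn2 : n+1 ≤ 2*ℓ) (hp : p < 2*ℓ)
    (hq : q < 2*ℓ) (hpq : p ≠ q) :
    (AmatE n ℓ p q = 0 ↔
      Even n ∧ ((p = 2*ℓ-2 ∧ q = 2*ℓ-1) ∨ (q = 2*ℓ-2 ∧ p = 2*ℓ-1))) := by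
  have hℓ : 0 < ℓ := by omega
  unfold AmatE
  by_cases h1 : p < 2*ℓ-1 <;> by_cases h2 : q < 2*ℓ-1 <;>
    simp only [h1, h2, if_true, if_false, if_pos, if_neg, not_false_iff]
  · rw [SmatE_eq_zero]
    constructor
    · intro h; exact absurd h hpq
    · rintro ⟨_, (⟨e1, e2⟩ | ⟨e1, e2⟩)⟩ <;> omega
  · rw [vvecE_zero hn2]
    constructor
    · rintro ⟨he, rfl⟩; exact ⟨he, Or.inl ⟨rfl, by omega⟩⟩
    · rintro ⟨he, (⟨e1, e2⟩ | ⟨e1, e2⟩)⟩ <;> [exact ⟨he, e1⟩; omega]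
  · rw [neg_eq_zero, vvecE_zero hn2]
    constructor
    · rintro ⟨he, rfl⟩; exact ⟨he, Or.inr ⟨rfl, by omega⟩⟩
    · rintro ⟨he, (⟨e1, e2⟩ | ⟨e1, e2⟩)⟩ <;> [omega; exact ⟨he, e1⟩]
  · omega

def starP (ℓ t i j : ℕ) : Prop := i = t - 1 ∧ 2*ℓ*t ≤ j ∧ j < 2*ℓ*(t+1)
def pairP (ℓ t i j : ℕ) : Prop := i = 2*ℓ*t + (2*ℓ-2) ∧ j = 2*ℓ*t + (2*ℓ-1)

def Pz (ℓ : ℕ) (ν : ℕ → ℕ) (k i j : ℕ) : Prop :=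
  (∃ t, 0 < t ∧ t < k ∧ (starP ℓ t i j ∨ starP ℓ t j i)) ∨
  (∃ t, t < k ∧ Even (ν t) ∧ (pairP ℓ t i j ∨ pairP ℓ t j i))

lemma Pz_symm {ℓ : ℕ} {ν : ℕ → ℕ} {k i j : ℕ} : Pz ℓ ν k i j ↔ Pz ℓ ν k j i := by
  unfold Pz
  constructor <;>
  · rintro (⟨t, h1, h2, h3⟩ | ⟨t, h1, h2, h3⟩)
    · exact Or.inl ⟨t, h1, h2, h3.symm⟩
    · exact Or.inr ⟨t, h1, h2, h3.symm⟩

lemma BE_zero {ℓ : ℕ} {ν : ℕ → ℕ} (hℓ : 0 < ℓ) :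
    ∀ k, k+1 ≤ 2*ℓ → (∀ t, t < k → 0 < ν t ∧ ν t + 1 ≤ 2*ℓ) →
    ∀ i j, i < 2*ℓ*k → j < 2*ℓ*k → i ≠ j →
      (BE ℓ ν k i j = 0 ↔ Pz ℓ ν k i j) := by
  intro k
  induction k with
  | zero => intro _ _ i j hi _ _; simp at hi
  | succ k ih =>
    intro hk2 hν i j hi hj hij
    have hi' : i < 2*ℓ*k + 2*ℓ := by nlinarith
    have hj' : j < 2*ℓ*k + 2*ℓ := by nlinarith
    by_cases hik : i < 2*ℓ*k <;> by_cases hjk : j < 2*ℓ*k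
    · -- both in the old part
      have hk1 : 1 ≤ k := by by_contra h; push_neg at h; interval_cases k <;> omega
      simp only [BE, if_pos hik, if_pos hjk]
      rw [ih (by omega) (fun t ht => hν t (by omega)) i j hik hjk hij]
      unfold Pz
      constructor
      · rintro (⟨t, h1, h2, h3⟩ | ⟨t, h1, h2, h3⟩)
        · exact Or.inl ⟨t, h1, by omega, h3⟩
        · exact Or.inr ⟨t, by omega, h2, h3⟩
      · rintro (⟨t, h1, h2, h3⟩ | ⟨t, h1, h2, h3⟩)
        · refine Or.inl ⟨t, h1, ?_, h3⟩
          rcases h3 with ⟨_, hb, _⟩ | ⟨_, hb, _⟩ <;>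
          · rcases Nat.lt_or_ge t k with h | h; exact h
            have : 2*ℓ*k ≤ 2*ℓ*t := Nat.mul_le_mul_left _ h
            omega
        · refine Or.inr ⟨t, ?_, h2, h3⟩
          rcases h3 with ⟨ha, hb⟩ | ⟨ha, hb⟩ <;>
          · rcases Nat.lt_or_ge t k with h | h; exact h
            have : 2*ℓ*k ≤ 2*ℓ*t := Nat.mul_le_mul_left _ h
            omega
    · -- i old, j new : column k-1
      have hk1 : 1 ≤ k := by by_contra h; push_neg at h; interval_cases k <;> omega
      simp only [BE, if_pos hik, if_neg hjk, if_pos (show k - 1 < 2*ℓ*k from lt_of_lt_of_le (Nat.sub_lt (by omega) (by omega)) (by nlinarith))]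
      rw [BE_colG hℓ k (by omega) (k-1) (by omega) i hik]
      have ekk : k - 1 + 1 = k := by omega
      rw [ekk]
      have hkk : k ≤ 2*ℓ*k := by nlinarith
      constructor
      · rintro (h | ⟨h1, _, _⟩)
        · exact Or.inl ⟨k, by omega, by omega, Or.inl ⟨h, by omega, by nlinarith⟩⟩
        · omega
      · rintro (⟨t, h1, h2, (⟨ha, hb, hc⟩ | ⟨ha, hb, hc⟩)⟩ |
                ⟨t, h1, h2, (⟨ha, hb⟩ | ⟨ha, hb⟩)⟩)
        · rcases Nat.lt_or_ge t k with h | h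
          · have : 2*ℓ*(t+1) ≤ 2*ℓ*k := Nat.mul_le_mul_left _ (by omega)
            omega
          · left; omega
        · omega
        · rcases Nat.lt_or_ge t k with h | h
          · have : 2*ℓ*(t+1) ≤ 2*ℓ*k := Nat.mul_le_mul_left _ (by omega)
            have : 2*ℓ*(t+1) = 2*ℓ*t + 2*ℓ := by ring
            omega
          · have : 2*ℓ*k ≤ 2*ℓ*t := Nat.mul_le_mul_left _ h
            omega
        · rcases Nat.lt_or_ge t k with h | h
          · have : 2*ℓ*(t+1) ≤ 2*ℓ*k := Nat.mul_le_mul_left _ (by omega)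
            have : 2*ℓ*(t+1) = 2*ℓ*t + 2*ℓ := by ring
            omega
          · have : 2*ℓ*k ≤ 2*ℓ*t := Nat.mul_le_mul_left _ h
            omega
    · -- i new, j old
      have hk1 : 1 ≤ k := by by_contra h; push_neg at h; interval_cases k <;> omega
      simp only [BE, if_neg hik, if_pos hjk, if_pos (show k - 1 < 2*ℓ*k from lt_of_lt_of_le (Nat.sub_lt (by omega) (by omega)) (by nlinarith)),
        neg_eq_zero]
      rw [BE_colG hℓ k (by omega) (k-1) (by omega) j hjk]
      have ekk : k - 1 + 1 = k := by omega
      rw [ekk]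
      have hkk : k ≤ 2*ℓ*k := by nlinarith
      constructor
      · rintro (h | ⟨h1, _, _⟩)
        · exact Or.inl ⟨k, by omega, by omega, Or.inr ⟨h, by omega, by nlinarith⟩⟩
        · omega
      · rintro (⟨t, h1, h2, (⟨ha, hb, hc⟩ | ⟨ha, hb, hc⟩)⟩ |
                ⟨t, h1, h2, (⟨ha, hb⟩ | ⟨ha, hb⟩)⟩)
        · omega
        · rcases Nat.lt_or_ge t k with h | h
          · have : 2*ℓ*(t+1) ≤ 2*ℓ*k := Nat.mul_le_mul_left _ (by omega)
            omega
          · left; omega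
        · rcases Nat.lt_or_ge t k with h | h
          · have : 2*ℓ*(t+1) ≤ 2*ℓ*k := Nat.mul_le_mul_left _ (by omega)
            have : 2*ℓ*(t+1) = 2*ℓ*t + 2*ℓ := by ring
            omega
          · have : 2*ℓ*k ≤ 2*ℓ*t := Nat.mul_le_mul_left _ h
            omega
        · rcases Nat.lt_or_ge t k with h | h
          · have : 2*ℓ*(t+1) ≤ 2*ℓ*k := Nat.mul_le_mul_left _ (by omega)
            have : 2*ℓ*(t+1) = 2*ℓ*t + 2*ℓ := by ring
            omega
          · have : 2*ℓ*k ≤ 2*ℓ*t := Nat.mul_le_mul_left _ h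
            omega
    · -- both new : A block
      simp only [BE, if_neg hik, if_neg hjk]
      obtain ⟨hν1, hν2⟩ := hν k (by omega)
      rw [AmatE_zero hν1 hν2 (by omega) (by omega) (by omega)]
      have hkk : k ≤ 2*ℓ*k := by nlinarith
      constructor
      · rintro ⟨he, (⟨e1, e2⟩ | ⟨e1, e2⟩)⟩
        · exact Or.inr ⟨k, by omega, he, Or.inl ⟨by omega, by omega⟩⟩
        · exact Or.inr ⟨k, by omega, he, Or.inr ⟨by omega, by omega⟩⟩
      · rintro (⟨t, h1, h2, (⟨ha, hb, hc⟩ | ⟨ha, hb, hc⟩)⟩ |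
                ⟨t, h1, h2, (⟨ha, hb⟩ | ⟨ha, hb⟩)⟩)
        · omega
        · omega
        · rcases Nat.lt_or_ge t k with h | h
          · have : 2*ℓ*(t+1) ≤ 2*ℓ*k := Nat.mul_le_mul_left _ (by omega)
            have : 2*ℓ*(t+1) = 2*ℓ*t + 2*ℓ := by ring
            omega
          · have : t = k := by omega
            subst this
            exact ⟨h2, Or.inl ⟨by omega, by omega⟩⟩
        · rcases Nat.lt_or_ge t k with h | h
          · have : 2*ℓ*(t+1) ≤ 2*ℓ*k := Nat.mul_le_mul_left _ (by omega)
            have : 2*ℓ*(t+1) = 2*ℓ*t + 2*ℓ := by ring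
            omega
          · have : t = k := by omega
            subst this
            exact ⟨h2, Or.inr ⟨by omega, by omega⟩⟩

section WalkLemmas
variable {V : Type*} {G : SimpleGraph V}

lemma support_eq_map : ∀ {u v : V} (p : G.Walk u v),
    p.support = (List.range (p.length+1)).map p.getVert := by
  intro u v p
  induction p with
  | nil => simp [SimpleGraph.Walk.getVert]
  | cons h q ih =>
    rw [SimpleGraph.Walk.support_cons, ih, SimpleGraph.Walk.length_cons]
    conv_rhs => rw [List.range_succ_eq_map, List.map_cons, List.map_map]
    simp [Function.comp_def, SimpleGraph.Walk.getVert_cons_succ]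

lemma getVert_mem {u v : V} (p : G.Walk u v) (i : ℕ) (h : i ≤ p.length) :
    p.getVert i ∈ p.support := by
  rw [support_eq_map]
  exact List.mem_map_of_mem (List.mem_range.mpr (by omega))

lemma cycle_getVert_ne {x : V} (c : G.Walk x x) (hc : c.IsCycle) :
    c.getVert 1 ≠ c.getVert (c.length - 1) := by
  have h3 := hc.three_le_length
  have nod := hc.support_nodup
  rw [support_eq_map, List.range_succ_eq_map, List.map_cons, List.tail_cons,
    List.map_map] at nod
  intro heq
  have hinj := List.nodup_iff_injective_get.mp nod
  have hlen : ((List.range c.length).map (c.getVert ∘ Nat.succ)).length = c.length := by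
    simp
  have e0 : ((List.range c.length).map (c.getVert ∘ Nat.succ)).get
      ⟨0, by rw [hlen]; omega⟩ = c.getVert 1 := by
    simp
  have e1 : ((List.range c.length).map (c.getVert ∘ Nat.succ)).get
      ⟨c.length - 2, by rw [hlen]; omega⟩ = c.getVert (c.length - 1) := by
    simp; congr 1; omega
  have := hinj (e0.trans (heq.trans e1.symm))
  simp only [Fin.mk.injEq] at this
  omega

lemma cycle_two_nbrs [DecidableEq V] {v : V} (w : G.Walk v v) (hw : w.IsCycle) {x : V}
    (hx : x ∈ w.support) : ∃ y z, y ≠ z ∧ G.Adj x y ∧ G.Adj x z := by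
  have hc := hw.rotate hx
  set c := w.rotate x hx with hcdef
  have h3 := hc.three_le_length
  refine ⟨c.getVert 1, c.getVert (c.length - 1), cycle_getVert_ne c hc, ?_, ?_⟩
  · have := SimpleGraph.Walk.adj_snd (p := c) hc.not_nil
    exact this
  · have h := c.adj_getVert_succ (i := c.length - 1) (by omega)
    have e : c.length - 1 + 1 = c.length := by omega
    rw [e, SimpleGraph.Walk.getVert_length] at h
    exact h.symm

end WalkLemmas

def D2f (ℓ : ℕ) (ν : ℕ → ℕ) (k x : ℕ) : Prop :=
  ∃ t, 0 < t ∧ t < k ∧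
    (x = t-1 ∨ ((x = 2*ℓ*t+(2*ℓ-2) ∨ x = 2*ℓ*t+(2*ℓ-1)) ∧ Even (ν t)))

def tripleP (ℓ t x : ℕ) : Prop :=
  x = t-1 ∨ x = 2*ℓ*t+(2*ℓ-2) ∨ x = 2*ℓ*t+(2*ℓ-1)

lemma blkuniq {ℓ s t x : ℕ} (h1 : 2*ℓ*t ≤ x) (h2 : x < 2*ℓ*(t+1))
    (h3 : 2*ℓ*s ≤ x) (h4 : x < 2*ℓ*(s+1)) : s = t := by
  have a := Nat.lt_of_mul_lt_mul_left (lt_of_le_of_lt h1 h4)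
  have b := Nat.lt_of_mul_lt_mul_left (lt_of_le_of_lt h3 h2)
  omega

lemma mul_ge {ℓ t : ℕ} (ht : 1 ≤ t) : 2*ℓ ≤ 2*ℓ*t := by nlinarith

lemma mul_succ' (ℓ t : ℕ) : 2*ℓ*(t+1) = 2*ℓ*t + 2*ℓ := by ring

lemma D2char {ℓ k : ℕ} {ν : ℕ → ℕ} (hℓ : 0 < ℓ) (hk2 : k+1 ≤ 2*ℓ)
    {x y z : ℕ} (hyz : y ≠ z) (hxy : Pz ℓ ν k x y) (hxz : Pz ℓ ν k x z) :
    D2f ℓ ν k x := by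
  rcases hxy with ⟨t, ht0, htk, (⟨ha, hb, hc⟩ | ⟨ha, hb, hc⟩)⟩ |
    ⟨t, htk, hev, (⟨ha, hb⟩ | ⟨ha, hb⟩)⟩
  · exact ⟨t, ht0, htk, Or.inl ha⟩
  · -- x in block t, y = t-1
    have hmt := mul_ge (ℓ := ℓ) ht0
    have hst := mul_succ' ℓ t
    rcases hxz with ⟨s, hs0, hsk, (⟨ha', hb', hc'⟩ | ⟨ha', hb', hc'⟩)⟩ |
      ⟨s, hsk, hev', (⟨ha', hb'⟩ | ⟨ha', hb'⟩)⟩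
    · omega
    · have := blkuniq hb hc hb' hc'
      omega
    · -- x = sp1 s
      have hms := mul_ge (ℓ := ℓ) (show 1 ≤ s by
        by_contra h; push_neg at h; interval_cases s; omega)
      have hss := mul_succ' ℓ s
      have : s = t := blkuniq hb hc (by omega) (by omega)
      subst this
      exact ⟨s, by omega, hsk, Or.inr ⟨Or.inl ha', hev'⟩⟩
    · have hms := mul_ge (ℓ := ℓ) (show 1 ≤ s by
        by_contra h; push_neg at h; interval_cases s; omega)
      have hss := mul_succ' ℓ s
      have : s = t := blkuniq hb hc (by omega) (by omega)
      subst this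
      exact ⟨s, by omega, hsk, Or.inr ⟨Or.inr hb', hev'⟩⟩
  · -- x = sp1 t, y = sp2 t
    rcases Nat.eq_zero_or_pos t with rfl | ht0
    · -- t = 0 : x = 2ℓ-2
      rcases hxz with ⟨s, hs0, hsk, (⟨ha', hb', hc'⟩ | ⟨ha', hb', hc'⟩)⟩ |
        ⟨s, hsk, hev', (⟨ha', hb'⟩ | ⟨ha', hb'⟩)⟩
      · omega
      · have hms := mul_ge (ℓ := ℓ) hs0
        omega
      · have hms : s = 0 := by
          by_contra h
          have := mul_ge (ℓ := ℓ) (show 1 ≤ s by omega)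
          omega
        subst hms; omega
      · have hms : s = 0 := by
          by_contra h
          have := mul_ge (ℓ := ℓ) (show 1 ≤ s by omega)
          omega
        subst hms; omega
    · exact ⟨t, ht0, htk, Or.inr ⟨Or.inl ha, hev⟩⟩
  · -- x = sp2 t, y = sp1 t
    rcases Nat.eq_zero_or_pos t with rfl | ht0
    · rcases hxz with ⟨s, hs0, hsk, (⟨ha', hb', hc'⟩ | ⟨ha', hb', hc'⟩)⟩ |
        ⟨s, hsk, hev', (⟨ha', hb'⟩ | ⟨ha', hb'⟩)⟩
      · omega
      · have hms := mul_ge (ℓ := ℓ) hs0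
        omega
      · have hms : s = 0 := by
          by_contra h
          have := mul_ge (ℓ := ℓ) (show 1 ≤ s by omega)
          omega
        subst hms; omega
      · have hms : s = 0 := by
          by_contra h
          have := mul_ge (ℓ := ℓ) (show 1 ≤ s by omega)
          omega
        subst hms; omega
    · exact ⟨t, ht0, htk, Or.inr ⟨Or.inr hb, hev⟩⟩

lemma edge_triple {ℓ k : ℕ} {ν : ℕ → ℕ} (hℓ : 0 < ℓ) (hk2 : k+1 ≤ 2*ℓ)
    {x y : ℕ} (hx : D2f ℓ ν k x) (hy : D2f ℓ ν k y) (hpz : Pz ℓ ν k x y) :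
    ∃ t, 0 < t ∧ t < k ∧ Even (ν t) ∧ tripleP ℓ t x ∧ tripleP ℓ t y := by
  obtain ⟨t, ht0, htk, hxt⟩ := hx
  have hmt := mul_ge (ℓ := ℓ) ht0
  have hst := mul_succ' ℓ t
  rcases hpz with ⟨s, hs0, hsk, (⟨ha, hb, hc⟩ | ⟨ha, hb, hc⟩)⟩ |
    ⟨s, hsk, hev, (⟨ha, hb⟩ | ⟨ha, hb⟩)⟩
  · -- x = s-1, y ∈ block s
    have hms := mul_ge (ℓ := ℓ) hs0
    have hxe : x = t - 1 := by rcases hxt with h | ⟨(h | h), _⟩ <;> omega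
    have hts : t = s := by omega
    subst hts
    obtain ⟨u, hu0, huk, hyu⟩ := hy
    have hmu := mul_ge (ℓ := ℓ) hu0
    have hsu := mul_succ' ℓ u
    rcases hyu with h | ⟨(h | h), hev⟩
    · omega
    · have : u = t := blkuniq hb hc (by omega) (by omega)
      subst this
      exact ⟨u, hu0, huk, hev, Or.inl hxe, Or.inr (Or.inl h)⟩
    · have : u = t := blkuniq hb hc (by omega) (by omega)
      subst this
      exact ⟨u, hu0, huk, hev, Or.inl hxe, Or.inr (Or.inr h)⟩
  · -- y = s-1, x ∈ block s
    have hms := mul_ge (ℓ := ℓ) hs0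
    have hss := mul_succ' ℓ s
    rcases hxt with h | ⟨(h | h), hev⟩
    · omega
    · have : s = t := blkuniq (by omega) (by omega) hb hc
      subst this
      exact ⟨s, hs0, hsk, hev, Or.inr (Or.inl h), Or.inl ha⟩
    · have : s = t := blkuniq (by omega) (by omega) hb hc
      subst this
      exact ⟨s, hs0, hsk, hev, Or.inr (Or.inr h), Or.inl ha⟩
  · -- x = sp1 s, y = sp2 s
    have hss := mul_succ' ℓ s
    have hts : t = s := by
      rcases hxt with h | ⟨(h | h), _⟩
      · omega
      · exact blkuniq (ℓ := ℓ) (s := t) (t := s) (x := x)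
          (by omega) (by omega) (by omega) (by omega)
      · exact blkuniq (ℓ := ℓ) (s := t) (t := s) (x := x)
          (by omega) (by omega) (by omega) (by omega)
    subst hts
    exact ⟨t, ht0, htk, hev, Or.inr (Or.inl ha), Or.inr (Or.inr hb)⟩
  · -- y = sp1 s, x = sp2 s
    have hss := mul_succ' ℓ s
    have hts : t = s := by
      rcases hxt with h | ⟨(h | h), _⟩
      · omega
      · exact blkuniq (ℓ := ℓ) (s := t) (t := s) (x := x)
          (by omega) (by omega) (by omega) (by omega)
      · exact blkuniq (ℓ := ℓ) (s := t) (t := s) (x := x)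
          (by omega) (by omega) (by omega) (by omega)
    subst hts
    exact ⟨t, ht0, htk, hev, Or.inr (Or.inr hb), Or.inr (Or.inl ha)⟩

lemma triple_uniq {ℓ k s t x : ℕ} (hℓ : 0 < ℓ) (hk2 : k+1 ≤ 2*ℓ)
    (ht0 : 0 < t) (htk : t < k) (hs0 : 0 < s) (hsk : s < k)
    (hxt : tripleP ℓ t x) (hxs : tripleP ℓ s x) : s = t := by
  have hmt := mul_ge (ℓ := ℓ) ht0
  have hms := mul_ge (ℓ := ℓ) hs0
  have hst := mul_succ' ℓ t
  have hss := mul_succ' ℓ s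
  rcases hxt with h | h | h <;> rcases hxs with h' | h' | h' <;>
    first
      | omega
      | exact blkuniq (ℓ := ℓ) (s := s) (t := t) (x := x)
          (by omega) (by omega) (by omega) (by omega)

lemma triple_adj {ℓ k t x y : ℕ} (hℓ : 0 < ℓ) (hk2 : k+1 ≤ 2*ℓ)
    {ν : ℕ → ℕ} (ht0 : 0 < t) (htk : t < k) (hev : Even (ν t))
    (hxt : tripleP ℓ t x) (hyt : tripleP ℓ t y) (hxy : x ≠ y) :
    Pz ℓ ν k x y := by
  have hmt := mul_ge (ℓ := ℓ) ht0
  have hst := mul_succ' ℓ t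
  rcases hxt with h | h | h <;> rcases hyt with h' | h' | h'
  · omega
  · exact Or.inl ⟨t, ht0, htk, Or.inl ⟨h, by omega, by omega⟩⟩
  · exact Or.inl ⟨t, ht0, htk, Or.inl ⟨h, by omega, by omega⟩⟩
  · exact Or.inl ⟨t, ht0, htk, Or.inr ⟨h', by omega, by omega⟩⟩
  · omega
  · exact Or.inr ⟨t, htk, hev, Or.inl ⟨h, h'⟩⟩
  · exact Or.inl ⟨t, ht0, htk, Or.inr ⟨h', by omega, by omega⟩⟩
  · exact Or.inr ⟨t, htk, hev, Or.inr ⟨h', h⟩⟩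
  · omega

/-- in the simple graph on `{1,…,2ℓk}` in which two distinct vertices `i, j`
are adjacent exactly when `(B_{ν,ℓ})_{ij} = 0`, every cycle has length 3; in particular
the support of every cycle spans a clique. -/
theorem Bmat_graph_cycles (k ℓ : ℕ) (ν : ℕ → ℕ) (hk : 0 < k)
    (hν : ∀ i < k, 0 < ν i) (hℓ : ∀ i < k, ν i + 1 ≤ 2 * ℓ) (hkℓ : k + 1 ≤ 2 * ℓ) :
    ∀ (v : Fin (2 * ℓ * k))
      (w : (SimpleGraph.fromRel fun i j => Bmat ℓ ν k i j = 0).Walk v v),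
      w.IsCycle →
        w.length = 3 ∧
        (SimpleGraph.fromRel fun i j => Bmat ℓ ν k i j = 0).IsClique
          {x | x ∈ w.support} := by
  have hℓ0 : 0 < ℓ := by omega
  have hν2 : ∀ t, t < k → 0 < ν t ∧ ν t + 1 ≤ 2*ℓ := fun t ht => ⟨hν t ht, hℓ t ht⟩
  set G := (SimpleGraph.fromRel fun i j : Fin (2*ℓ*k) => Bmat ℓ ν k i j = 0) with hG
  have hadj : ∀ a b : Fin (2*ℓ*k), G.Adj a b ↔ ((a:ℕ) ≠ (b:ℕ) ∧ Pz ℓ ν k a b) := by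
    intro a b
    rw [hG, SimpleGraph.fromRel_adj]
    constructor
    · rintro ⟨hne, h | h⟩
      · have hv : (a:ℕ) ≠ (b:ℕ) := fun hh => hne (Fin.ext hh)
        rw [Bmat_eq_BE] at h
        exact ⟨hv, (BE_zero hℓ0 k hkℓ hν2 a b a.2 b.2 hv).mp h⟩
      · have hv : (a:ℕ) ≠ (b:ℕ) := fun hh => hne (Fin.ext hh)
        rw [Bmat_eq_BE] at h
        exact ⟨hv, Pz_symm.mp ((BE_zero hℓ0 k hkℓ hν2 b a b.2 a.2 hv.symm).mp h)⟩
    · rintro ⟨hv, hp⟩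
      refine ⟨fun hh => hv (congrArg Fin.val hh), Or.inl ?_⟩
      rw [Bmat_eq_BE]
      exact (BE_zero hℓ0 k hkℓ hν2 a b a.2 b.2 hv).mpr hp
  intro v w hw
  have h3 := hw.three_le_length
  have hsup : ∀ x ∈ w.support, D2f ℓ ν k (x:ℕ) := by
    intro x hx
    obtain ⟨y, z, hyz, hxy, hxz⟩ := cycle_two_nbrs w hw hx
    exact D2char hℓ0 hkℓ (fun hh => hyz (Fin.ext hh))
      ((hadj x y).mp hxy).2 ((hadj x z).mp hxz).2
  have hvs : v ∈ w.support := w.start_mem_support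
  have hu : w.getVert 1 ∈ w.support := getVert_mem w 1 (by omega)
  have hadj1 : G.Adj v (w.getVert 1) := SimpleGraph.Walk.adj_snd hw.not_nil
  obtain ⟨t, ht0, htk, hev, htv, htu⟩ :=
    edge_triple hℓ0 hkℓ (hsup v hvs) (hsup _ hu) ((hadj _ _).mp hadj1).2
  have prop : ∀ {a b : Fin (2*ℓ*k)} (p : G.Walk a b),
      (∀ x ∈ p.support, D2f ℓ ν k (x:ℕ)) → tripleP ℓ t (a:ℕ) →
      ∀ x ∈ p.support, tripleP ℓ t (x:ℕ) := by
    intro a b p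
    induction p with
    | nil =>
      intro _ ha x hx
      rw [SimpleGraph.Walk.support_nil, List.mem_singleton] at hx
      subst hx; exact ha
    | @cons a c b hadj' q ih =>
      intro hD ha x hx
      rw [SimpleGraph.Walk.support_cons] at hx hD
      rcases List.mem_cons.mp hx with rfl | hx'
      · exact ha
      · have hD2a : D2f ℓ ν k (a:ℕ) := hD _ List.mem_cons_self
        have hD2c : D2f ℓ ν k (c:ℕ) :=
          hD _ (List.mem_cons_of_mem _ q.start_mem_support)
        obtain ⟨s, hs0, hsk, hsev, hsa, hsc⟩ :=
          edge_triple hℓ0 hkℓ hD2a hD2c ((hadj _ _).mp hadj').2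
        have hst : s = t := triple_uniq hℓ0 hkℓ ht0 htk hs0 hsk ha hsa
        subst hst
        exact ih (fun y hy => hD y (List.mem_cons_of_mem _ hy)) hsc x hx'
  have hall : ∀ x ∈ w.support, tripleP ℓ t (x:ℕ) := prop w hsup htv
  have hclique : G.IsClique {x | x ∈ w.support} := by
    intro a ha b hb hab
    rw [hadj]
    have hva : (a:ℕ) ≠ (b:ℕ) := fun hh => hab (Fin.ext hh)
    exact ⟨hva, triple_adj hℓ0 hkℓ ht0 htk hev (hall a ha) (hall b hb) hva⟩
  refine ⟨?_, hclique⟩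
  -- length computation
  have nod := hw.support_nodup
  have lnod : (w.support.tail.map Fin.val).Nodup := nod.map Fin.val_injective
  have lsub : (w.support.tail.map Fin.val).toFinset ⊆
      ({t-1, 2*ℓ*t+(2*ℓ-2), 2*ℓ*t+(2*ℓ-1)} : Finset ℕ) := by
    intro x hx
    obtain ⟨a, haT, rfl⟩ := List.mem_map.mp (List.mem_toFinset.mp hx)
    rcases hall a (List.mem_of_mem_tail haT) with h | h | h <;> simp [h]
  have hcard := Finset.card_le_card lsub
  have htf : (w.support.tail.map Fin.val).toFinset.card
      = (w.support.tail.map Fin.val).length := List.toFinset_card_of_nodup lnod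
  have hlen : (w.support.tail.map Fin.val).length = w.length := by
    rw [List.length_map, List.length_tail, SimpleGraph.Walk.length_support]
    omega
  have hS : ({t-1, 2*ℓ*t+(2*ℓ-2), 2*ℓ*t+(2*ℓ-1)} : Finset ℕ).card ≤ 3 := by
    apply le_trans (Finset.card_insert_le _ _)
    have := Finset.card_insert_le (2*ℓ*t+(2*ℓ-2)) ({2*ℓ*t+(2*ℓ-1)} : Finset ℕ)
    simp at this ⊢
    omega
  omega
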